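/- In extreme Reissner–Nordström, the commutator of the wave operator with ∂_r in (v, r) coordinates is [□_g, ∂_r]ψ = −D' ∂_r∂_r ψ + (2/r²) ∂_v ψ − R' ∂_r ψ + (2/r) Δψ, where D(r) = (1−M/r)², R(r) = D'(r) + 2D(r)/r, R' = dR/dr, and Δ is the Laplacian on the sphere of radius r. In particular, since D'(M) = 0, the top-order term −D' ∂_r² ψ vanishes on the horizon r = M. -/

import Mathlib

/-- Partial derivative in the second (radial) variable. -/
noncomputable def prd (f : ℝ → ℝ → ℝ) : ℝ → ℝ → ℝ := fun v r => deriv (fun r' => f v r') r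

/-- Partial derivative in the first (advanced time) variable. -/
noncomputable def pvd (f : ℝ → ℝ → ℝ) : ℝ → ℝ → ℝ := fun v r => deriv (fun v' => f v' r) v

noncomputable def Pd (w : ℝ × ℝ) (F : ℝ × ℝ → ℝ) : ℝ × ℝ → ℝ := fun p => fderiv ℝ F p w

lemma hasDerivAt_Pd2 {F : ℝ × ℝ → ℝ} {v r : ℝ} (hF : DifferentiableAt ℝ F (v, r)) :
    HasDerivAt (fun r' => F (v, r')) (Pd (0, 1) F (v, r)) r := by
  have h : HasDerivAt (fun r' : ℝ => ((v, r') : ℝ × ℝ)) (0, 1) r :=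
    (hasDerivAt_const r v).prodMk (hasDerivAt_id r)
  have h2 := (hF.hasFDerivAt.comp r h.hasFDerivAt).hasDerivAt
  exact h2.congr_deriv (by simp [Pd])

lemma hasDerivAt_Pd1 {F : ℝ × ℝ → ℝ} {v r : ℝ} (hF : DifferentiableAt ℝ F (v, r)) :
    HasDerivAt (fun v' => F (v', r)) (Pd (1, 0) F (v, r)) v := by
  have h : HasDerivAt (fun v' : ℝ => ((v', r) : ℝ × ℝ)) (1, 0) v :=
    (hasDerivAt_id v).prodMk (hasDerivAt_const v r)
  have h2 := (hF.hasFDerivAt.comp v h.hasFDerivAt).hasDerivAt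
  exact h2.congr_deriv (by simp [Pd])

lemma contDiff_Pd (w : ℝ × ℝ) {m n : WithTop ℕ∞} {F : ℝ × ℝ → ℝ}
    (hF : ContDiff ℝ n F) (h : m + 1 ≤ n) : ContDiff ℝ m (Pd w F) :=
  (hF.fderiv_right h).clm_apply contDiff_const

lemma Pd_comm {F : ℝ × ℝ → ℝ} (hF : ContDiff ℝ 2 F) (p a b : ℝ × ℝ) :
    Pd a (Pd b F) p = Pd b (Pd a F) p := by
  have hsym : IsSymmSndFDerivAt ℝ F p := hF.contDiffAt.isSymmSndFDerivAt (by simp)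
  have h1 : ContDiff ℝ 1 (fderiv ℝ F) := hF.fderiv_right (by norm_num)
  have hd : DifferentiableAt ℝ (fderiv ℝ F) p := (h1.differentiable one_ne_zero) p
  have key : ∀ w u : ℝ × ℝ, Pd u (Pd w F) p = fderiv ℝ (fderiv ℝ F) p u w := by
    intro w u
    show fderiv ℝ (fun q => (fderiv ℝ F q) w) p u = _
    rw [fderiv_clm_apply hd (differentiableAt_const w)]
    simp
  rw [key, key]
  exact hsym.eq a b

theorem commutator_with_partial_r (M : ℝ) (hM : 0 < M) (D R : ℝ → ℝ)
    (hD : ∀ r, D r = (1 - M / r) ^ 2)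
    (hR : ∀ r, R r = deriv D r + 2 * D r / r)
    (ψ Lψ Ldrψ : ℝ → ℝ → ℝ)
    (hψ : ContDiff ℝ 3 (fun p : ℝ × ℝ => ψ p.1 p.2))
    (hLψ : ContDiff ℝ 1 (fun p : ℝ × ℝ => Lψ p.1 p.2))
    (hLcomm : ∀ v r, 0 < r → Ldrψ v r = prd Lψ v r + (2 / r) * Lψ v r)
    (Box : (ℝ → ℝ → ℝ) → (ℝ → ℝ → ℝ) → (ℝ → ℝ → ℝ))
    (hBox : ∀ Lf f v r, Box Lf f v r =
      D r * prd (prd f) v r + 2 * pvd (prd f) v r + (2 / r) * pvd f v r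
        + R r * prd f v r + Lf v r) :
    (∀ v r, M ≤ r →
      Box Ldrψ (prd ψ) v r - prd (Box Lψ ψ) v r
        = -(deriv D r) * prd (prd ψ) v r + (2 / r ^ 2) * pvd ψ v r
          - deriv R r * prd ψ v r + (2 / r) * Lψ v r) ∧
    deriv D M = 0 := by
  -- derivative of D away from 0
  have hDfun : D = fun x => (1 - M / x) ^ 2 := funext hD
  have hDD : ∀ x : ℝ, x ≠ 0 → HasDerivAt D (2 * (1 - M / x) * (M / x ^ 2)) x := by
    intro x hx
    have h0 : HasDerivAt (fun y : ℝ => M / y) (M * -(x ^ 2)⁻¹) x := by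
      simpa [div_eq_mul_inv] using (hasDerivAt_inv hx).const_mul M
    have h1 : HasDerivAt (fun y : ℝ => 1 - M / y) (-(M * -(x ^ 2)⁻¹)) x := h0.const_sub 1
    have h2 := h1.fun_pow 2
    rw [hDfun]
    exact h2.congr_deriv (by push_cast; ring)
  constructor
  · intro v r hr
    have hr0 : (0 : ℝ) < r := lt_of_lt_of_le hM hr
    set F : ℝ × ℝ → ℝ := fun p => ψ p.1 p.2 with hFdef
    set G : ℝ × ℝ → ℝ := fun p => Lψ p.1 p.2 with hGdef
    have hF : ContDiff ℝ 3 F := hψ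
    have hFd : Differentiable ℝ F := hF.differentiable (by norm_num)
    have hGd : Differentiable ℝ G := hLψ.differentiable one_ne_zero
    have hA : ContDiff ℝ 2 (Pd (0, 1) F) := contDiff_Pd _ hF (by norm_num)
    have hB : ContDiff ℝ 2 (Pd (1, 0) F) := contDiff_Pd _ hF (by norm_num)
    have hAd : Differentiable ℝ (Pd (0, 1) F) := hA.differentiable (by norm_num)
    have hBd : Differentiable ℝ (Pd (1, 0) F) := hB.differentiable (by norm_num)
    have hA2 : ContDiff ℝ 1 (Pd (0, 1) (Pd (0, 1) F)) := contDiff_Pd _ hA (by norm_num)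
    have hA1 : ContDiff ℝ 1 (Pd (1, 0) (Pd (0, 1) F)) := contDiff_Pd _ hA (by norm_num)
    have hB2 : ContDiff ℝ 1 (Pd (0, 1) (Pd (1, 0) F)) := contDiff_Pd _ hB (by norm_num)
    -- identification of the partial derivatives
    have E1 : prd ψ = fun v r => Pd (0, 1) F (v, r) := by
      funext v' r'; exact (hasDerivAt_Pd2 (hFd _)).deriv
    have E2 : pvd ψ = fun v r => Pd (1, 0) F (v, r) := by
      funext v' r'; exact (hasDerivAt_Pd1 (hFd _)).deriv
    have E3 : prd (prd ψ) = fun v r => Pd (0, 1) (Pd (0, 1) F) (v, r) := by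
      rw [E1]; funext v' r'; exact (hasDerivAt_Pd2 (hAd _)).deriv
    have E4 : pvd (prd ψ) = fun v r => Pd (1, 0) (Pd (0, 1) F) (v, r) := by
      rw [E1]; funext v' r'; exact (hasDerivAt_Pd1 (hAd _)).deriv
    have E7 : prd (prd (prd ψ)) = fun v r => Pd (0, 1) (Pd (0, 1) (Pd (0, 1) F)) (v, r) := by
      rw [E3]; funext v' r'; exact (hasDerivAt_Pd2 ((hA2.differentiable one_ne_zero) _)).deriv
    have E8 : pvd (prd (prd ψ)) = fun v r => Pd (1, 0) (Pd (0, 1) (Pd (0, 1) F)) (v, r) := by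
      rw [E3]; funext v' r'; exact (hasDerivAt_Pd1 ((hA2.differentiable one_ne_zero) _)).deriv
    have E10 : prd Lψ = fun v r => Pd (0, 1) G (v, r) := by
      funext v' r'; exact (hasDerivAt_Pd2 (hGd _)).deriv
    -- differentiability of D and R at r
    have hDdiff : DifferentiableAt ℝ D r := (hDD r hr0.ne').differentiableAt
    have hRev : R =ᶠ[nhds r] fun x => 2 * (1 - M / x) * (M / x ^ 2) + 2 * (1 - M / x) ^ 2 / x := by
      filter_upwards [eventually_gt_nhds hr0] with x hx
      rw [hR x, (hDD x hx.ne').deriv, hD x]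
    have hφdiff : DifferentiableAt ℝ
        (fun x : ℝ => 2 * (1 - M / x) * (M / x ^ 2) + 2 * (1 - M / x) ^ 2 / x) r := by
      have h0 : DifferentiableAt ℝ (fun x : ℝ => 1 - M / x) r :=
        (differentiableAt_const _).sub ((differentiableAt_const M).div differentiableAt_id hr0.ne')
      exact ((h0.const_mul 2).mul ((differentiableAt_const M).div
          (differentiableAt_id.pow 2) (pow_ne_zero 2 hr0.ne'))).add
        (((h0.pow 2).const_mul 2).div differentiableAt_id hr0.ne')
    have hRdiff : DifferentiableAt ℝ R r := hφdiff.congr_of_eventuallyEq hRev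
    -- derivative of the radial-direction function defining prd (Box Lψ ψ) v r
    have hfun : (fun r' => Box Lψ ψ v r') = fun r' =>
        D r' * Pd (0, 1) (Pd (0, 1) F) (v, r') + 2 * Pd (1, 0) (Pd (0, 1) F) (v, r')
          + (2 / r') * Pd (1, 0) F (v, r') + R r' * Pd (0, 1) F (v, r') + Lψ v r' := by
      funext r'
      rw [hBox, E3, E4, E2, E1]
    have hinv : HasDerivAt (fun r' : ℝ => 2 / r') (2 * -(r ^ 2)⁻¹) r := by
      simpa [div_eq_mul_inv] using (hasDerivAt_inv hr0.ne').const_mul (2 : ℝ)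
    have h1 : HasDerivAt (fun r' => Pd (0, 1) (Pd (0, 1) F) (v, r'))
        (Pd (0, 1) (Pd (0, 1) (Pd (0, 1) F)) (v, r)) r :=
      hasDerivAt_Pd2 ((hA2.differentiable one_ne_zero) _)
    have h2 : HasDerivAt (fun r' => Pd (1, 0) (Pd (0, 1) F) (v, r'))
        (Pd (0, 1) (Pd (1, 0) (Pd (0, 1) F)) (v, r)) r :=
      hasDerivAt_Pd2 ((hA1.differentiable one_ne_zero) _)
    have h3 : HasDerivAt (fun r' => Pd (1, 0) F (v, r'))
        (Pd (0, 1) (Pd (1, 0) F) (v, r)) r := hasDerivAt_Pd2 (hBd _)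
    have h4 : HasDerivAt (fun r' => Pd (0, 1) F (v, r'))
        (Pd (0, 1) (Pd (0, 1) F) (v, r)) r := hasDerivAt_Pd2 (hAd _)
    have h5 : HasDerivAt (fun r' => Lψ v r') (Pd (0, 1) G (v, r)) r := hasDerivAt_Pd2 (hGd _)
    have total := ((((hDdiff.hasDerivAt.mul h1).add (h2.const_mul 2)).add
        (hinv.mul h3)).add (hRdiff.hasDerivAt.mul h4)).add h5
    have hprdBox : prd (Box Lψ ψ) v r =
        deriv D r * Pd (0, 1) (Pd (0, 1) F) (v, r)
          + D r * Pd (0, 1) (Pd (0, 1) (Pd (0, 1) F)) (v, r)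
          + 2 * Pd (0, 1) (Pd (1, 0) (Pd (0, 1) F)) (v, r)
          + (2 * -(r ^ 2)⁻¹ * Pd (1, 0) F (v, r) + 2 / r * Pd (0, 1) (Pd (1, 0) F) (v, r))
          + (deriv R r * Pd (0, 1) F (v, r) + R r * Pd (0, 1) (Pd (0, 1) F) (v, r))
          + Pd (0, 1) G (v, r) := by
      show deriv (fun r' => Box Lψ ψ v r') r = _
      rw [hfun]
      exact total.deriv
    -- symmetry of mixed second partials
    have hs1 : Pd (1, 0) (Pd (0, 1) F) (v, r) = Pd (0, 1) (Pd (1, 0) F) (v, r) :=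
      Pd_comm (hF.of_le (by norm_num)) _ _ _
    have hs2 : Pd (1, 0) (Pd (0, 1) (Pd (0, 1) F)) (v, r)
        = Pd (0, 1) (Pd (1, 0) (Pd (0, 1) F)) (v, r) := Pd_comm hA _ _ _
    rw [hBox Ldrψ (prd ψ) v r, hLcomm v r hr0, hprdBox]
    rw [E7, E8, E4, E3, E10, E1, E2]
    beta_reduce
    rw [hs1, hs2]
    field_simp
    ring
  · have h := hDD M hM.ne'
    have : (1 : ℝ) - M / M = 0 := by rw [div_self hM.ne']; ring
    rw [h.deriv, this]
    ring
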